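/- Let M be a compact metric space, e : ℕ → M an injective map with dense range, and P a natural measure on M. If S ⊆ ℕ is ν*-measurable, then S has asymptotic density and d(S) = ν(S) = P(cl(e(S))). -/

import Mathlib

open Filter MeasureTheory
open scoped Classical

/-- `E_N(𝟙_A) = |A ∩ [1,N]| / N`. -/
noncomputable def densSeq (A : Set ℕ) : ℕ → ℝ := fun N =>
  (((Finset.Icc 1 N).filter (fun n => n ∈ A)).card : ℝ) / N

/-- `P` is a natural measure (w.r.t. the dense embedding `e : ℕ → M`) if the
sequence `(e(n))` is `P`-uniformly distributed in `M` and every nonempty open set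
has positive measure. -/
def IsNaturalMeasure {M : Type*} [MetricSpace M] [MeasurableSpace M]
    (e : ℕ → M) (P : Measure M) : Prop :=
  (∀ f : M → ℝ, Continuous f →
    Tendsto (fun N : ℕ => (∑ n ∈ Finset.Icc 1 N, f (e n)) / N) atTop
      (nhds (∫ α, f α ∂P))) ∧
  (∀ U : Set M, IsOpen U → U.Nonempty → 0 < P U)

lemma densSeq_nonneg (A : Set ℕ) (N : ℕ) : 0 ≤ densSeq A N := by
  unfold densSeq; positivity

lemma densSeq_le_one (A : Set ℕ) (N : ℕ) : densSeq A N ≤ 1 := by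
  unfold densSeq
  rcases Nat.eq_zero_or_pos N with h | h
  · simp [h]
  · rw [div_le_one (by positivity)]
    have := Finset.card_filter_le (Finset.Icc 1 N) (fun n => n ∈ A)
    simpa [Nat.card_Icc] using (Nat.cast_le (α := ℝ)).mpr this

/-- Upper bound: `limsup densSeq A ≤ P(closure(e '' A))`. -/
lemma limsup_densSeq_le {M : Type*} [MetricSpace M] [CompactSpace M]
    [MeasurableSpace M] [BorelSpace M]
    (P : Measure M) [IsProbabilityMeasure P] (e : ℕ → M)
    (h1 : ∀ f : M → ℝ, Continuous f →
      Tendsto (fun N : ℕ => (∑ n ∈ Finset.Icc 1 N, f (e n)) / N) atTop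
        (nhds (∫ α, f α ∂P)))
    (A : Set ℕ) :
    limsup (densSeq A) atTop ≤ (P (closure (e '' A))).toReal := by
  set C := closure (e '' A) with hCdef
  have hC : IsClosed C := isClosed_closure
  refine le_of_forall_pos_le_add fun ε hε => ?_
  -- choose an open set U ⊇ C with P U < P C + ε
  obtain ⟨U, hCU, hUopen, hPU⟩ := C.exists_isOpen_lt_of_lt (P C + ENNReal.ofReal ε)
    (ENNReal.lt_add_right (measure_ne_top P C) (by simp [hε]))
  -- Urysohn function: 1 on C, 0 outside U
  obtain ⟨f, hf0, hf1, hf01⟩ := exists_continuous_zero_one_of_isClosed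
    (isClosed_compl_iff.mpr hUopen) hC
    (by rw [Set.disjoint_compl_left_iff_subset]; exact hCU)
  have hfc : Continuous f := f.continuous
  have hftend := h1 f hfc
  -- pointwise bound: densSeq A N ≤ averages of f
  have hbound : ∀ N : ℕ, densSeq A N ≤ (∑ n ∈ Finset.Icc 1 N, f (e n)) / N := by
    intro N
    rcases Nat.eq_zero_or_pos N with h | h
    · simp [h, densSeq]
    · have hN : (0:ℝ) < N := by exact_mod_cast h
      refine div_le_div_of_nonneg_right ?_ hN.le
      have hcard : (((Finset.Icc 1 N).filter (fun n => n ∈ A)).card : ℝ)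
          = ∑ n ∈ (Finset.Icc 1 N).filter (fun n => n ∈ A), (1 : ℝ) := by
        simp
      rw [hcard]
      refine le_trans (Finset.sum_le_sum fun n hn => ?_)
        (Finset.sum_le_sum_of_subset_of_nonneg (Finset.filter_subset _ _)
          (fun n _ _ => (hf01 (e n)).1)
        )
      have hnA : n ∈ A := (Finset.mem_filter.mp hn).2
      have : e n ∈ C := subset_closure ⟨n, hnA, rfl⟩
      simp [hf1 this]
  -- limsup comparison
  have hls : limsup (densSeq A) atTop ≤ ∫ α, f α ∂P := by
    have := Filter.limsup_le_limsup (Filter.Eventually.of_forall hbound)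
      (Filter.IsBoundedUnder.isCoboundedUnder_le
        (Filter.isBoundedUnder_of ⟨0, densSeq_nonneg A⟩))
      hftend.isBoundedUnder_le
    rwa [hftend.limsup_eq] at this
  -- integral bound
  have hfint : Integrable f P :=
    hfc.integrable_of_hasCompactSupport (HasCompactSupport.of_compactSpace f)
  have hind : Integrable (U.indicator (fun _ => (1 : ℝ))) P :=
    (integrable_const (1 : ℝ)).indicator hUopen.measurableSet
  have hint : ∫ α, f α ∂P ≤ (P U).toReal := by
    have hle : ∀ α, f α ≤ U.indicator (fun _ => (1 : ℝ)) α := by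
      intro α
      by_cases hα : α ∈ U
      · simpa [Set.indicator_of_mem hα] using (hf01 α).2
      · have : f α = 0 := hf0 hα
        simp [Set.indicator_of_notMem hα, this]
    calc ∫ α, f α ∂P ≤ ∫ α, U.indicator (fun _ => (1 : ℝ)) α ∂P :=
          integral_mono hfint hind hle
      _ = (P U).toReal := by
          rw [integral_indicator_const (1 : ℝ) hUopen.measurableSet]; simp [measureReal_def]
  have hPU' : (P U).toReal ≤ (P C).toReal + ε := by
    have h1' : (P U).toReal ≤ (P C + ENNReal.ofReal ε).toReal :=
      ENNReal.toReal_mono (by finiteness) hPU.le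
    rwa [ENNReal.toReal_add (measure_ne_top P C) ENNReal.ofReal_ne_top,
      ENNReal.toReal_ofReal hε.le] at h1'
  exact hls.trans (hint.trans hPU')

/-- If `S ⊆ ℕ` is `ν*`-measurable (where `ν*(S) = P(cl(e(S)))` for a natural
measure `P`), then `S` has asymptotic density and `d(S) = ν(S) = P(cl(e(S)))`. -/
theorem stmt11 {M : Type*} [MetricSpace M] [CompactSpace M]
    [MeasurableSpace M] [BorelSpace M]
    (P : Measure M) [IsProbabilityMeasure P]
    (e : ℕ → M) (he : Function.Injective e) (hd : DenseRange e)
    (hP : IsNaturalMeasure e P) (S : Set ℕ)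
    (hS : P (closure (e '' S)) + P (closure (e '' Sᶜ)) = 1) :
    Tendsto (densSeq S) atTop (nhds ((P (closure (e '' S))).toReal)) := by
  set c : ℝ := (P (closure (e '' S))).toReal with hc
  set c' : ℝ := (P (closure (e '' Sᶜ))).toReal with hc'
  have hcc' : c + c' = 1 := by
    have := congrArg ENNReal.toReal hS
    rwa [ENNReal.toReal_add (measure_ne_top _ _) (measure_ne_top _ _),
      ENNReal.toReal_one] at this
  -- complement relation on densities
  have hsum : ∀ N : ℕ, 1 ≤ N → densSeq S N + densSeq Sᶜ N = 1 := by
    intro N hN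
    have h2 : ((Finset.Icc 1 N).filter (fun n => n ∈ S)).card
        + ((Finset.Icc 1 N).filter (fun n => n ∈ Sᶜ)).card = N := by
      classical
      simpa [Set.mem_compl_iff, Nat.card_Icc, Finset.filter_congr_decidable] using
        Finset.card_filter_add_card_filter_not
          (s := Finset.Icc 1 N) (p := fun n => n ∈ S)
    have hNpos : (0:ℝ) < N := by exact_mod_cast hN
    unfold densSeq
    rw [← add_div, div_eq_one_iff_eq hNpos.ne']
    have h2' : (((Finset.Icc 1 N).filter (fun n => n ∈ S)).card : ℝ)
        + (((Finset.Icc 1 N).filter (fun n => n ∈ Sᶜ)).card : ℝ) = N := by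
      exact_mod_cast congrArg (Nat.cast : ℕ → ℝ) h2
    convert h2' using 3
    exact congrArg Finset.card
      (@Finset.filter_congr_decidable ℕ (Finset.Icc 1 N) (fun n => n ∈ Sᶜ)
        (fun a => Classical.propDecidable _) (fun a => S.decidableCompl a))
  have hlimsup : limsup (densSeq S) atTop ≤ c := limsup_densSeq_le P e hP.1 S
  have hlimsup' : limsup (densSeq Sᶜ) atTop ≤ c' := limsup_densSeq_le P e hP.1 Sᶜ
  have hbdd : IsBoundedUnder (· ≤ ·) atTop (densSeq Sᶜ) :=
    Filter.isBoundedUnder_of ⟨1, densSeq_le_one Sᶜ⟩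
  have hliminf : c ≤ liminf (densSeq S) atTop := by
    refine le_of_forall_pos_le_add fun ε hε => ?_
    have hlt : limsup (densSeq Sᶜ) atTop < c' + ε := lt_of_le_of_lt hlimsup' (by linarith)
    have hev : ∀ᶠ N in atTop, densSeq Sᶜ N < c' + ε :=
      Filter.eventually_lt_of_limsup_lt hlt hbdd
    have hev2 : ∀ᶠ N in atTop, c - ε ≤ densSeq S N := by
      filter_upwards [hev, Filter.eventually_ge_atTop 1] with N h1 h2
      have := hsum N h2
      have hcc : c = 1 - c' := by linarith
      linarith
    have : c - ε ≤ liminf (densSeq S) atTop :=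
      Filter.le_liminf_of_le
        (Filter.IsBoundedUnder.isCoboundedUnder_ge
          (Filter.isBoundedUnder_of ⟨1, densSeq_le_one S⟩)) hev2
    linarith
  exact tendsto_of_le_liminf_of_limsup_le hliminf hlimsup
    (Filter.isBoundedUnder_of ⟨1, densSeq_le_one S⟩)
    (Filter.isBoundedUnder_of ⟨0, densSeq_nonneg S⟩)
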